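/- Let λ = iξ with ξ > 0, and for α, η real define μ₊(α) = 1 - ηλ + αλ(ηλ/(1-ηλ)) (the first-order expansion of the LEAD eigenvalue in α with β = 0). Then the derivative with respect to α at α = 0 of ρ(α) = |μ₊(α)|² equals (2η/|1-ηλ|²)(η²ξ⁴ - ξ²), which is negative if and only if η ∈ (0, 1/ξ). -/

import Mathlib

/-- With λ = iξ (ξ > 0) and μ₊(α) = (1-ηλ) + αηλ²/(1-ηλ), the derivative of
ρ(α) = |μ₊(α)|² at α = 0 equals (2η/|1-ηλ|²)(η²ξ⁴ - ξ²), which is negative iff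
η ∈ (0, 1/ξ). -/
theorem lead_eigenvalue_derivative_at_zero
    (ξ η : ℝ) (hξ : 0 < ξ) (hη : 0 < η) (lam : ℂ) (hlam : lam = ξ * Complex.I) :
    HasDerivAt (fun α : ℝ =>
        Complex.normSq ((1 - (η : ℂ) * lam) + (α : ℂ) * lam ^ 2 * (η : ℂ) / (1 - (η : ℂ) * lam)))
      ((2 * η / Complex.normSq (1 - (η : ℂ) * lam)) * (η ^ 2 * ξ ^ 4 - ξ ^ 2)) 0 ∧
    ((2 * η / Complex.normSq (1 - (η : ℂ) * lam)) * (η ^ 2 * ξ ^ 4 - ξ ^ 2) < 0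
      ↔ η ∈ Set.Ioo (0 : ℝ) (1 / ξ)) := by
  subst hlam
  set D : ℝ := 1 + η ^ 2 * ξ ^ 2 with hDdef
  have hDpos : 0 < D := by positivity
  have hDne : D ≠ 0 := ne_of_gt hDpos
  have hnormSq : Complex.normSq (1 - (η : ℂ) * ((ξ : ℂ) * Complex.I)) = D := by
    simp [Complex.normSq_apply, hDdef]
    ring
  have key : ∀ α : ℝ,
      Complex.normSq ((1 - (η : ℂ) * ((ξ : ℂ) * Complex.I)) +
        (α : ℂ) * ((ξ : ℂ) * Complex.I) ^ 2 * (η : ℂ) / (1 - (η : ℂ) * ((ξ : ℂ) * Complex.I)))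
      = (1 - α * (η * ξ ^ 2 / D)) ^ 2 + (η * ξ + α * (η ^ 2 * ξ ^ 3 / D)) ^ 2 := by
    intro α
    rw [Complex.normSq_apply]
    simp [Complex.div_re, Complex.div_im, Complex.normSq_apply, mul_pow, Complex.I_sq, ← Complex.ofReal_pow, hDdef]
    field_simp
    ring
  set c1 : ℝ := η * ξ ^ 2 / D
  set c2 : ℝ := η ^ 2 * ξ ^ 3 / D
  have hpoly : HasDerivAt (fun α : ℝ => (1 - α * c1) ^ 2 + (η * ξ + α * c2) ^ 2)
      ((2 * η / D) * (η ^ 2 * ξ ^ 4 - ξ ^ 2)) 0 := by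
    have h1 : HasDerivAt (fun α : ℝ => 1 - α * c1) (-c1) 0 :=
      ((hasDerivAt_id 0).mul_const c1).const_sub 1 |>.congr_deriv (by simp)
    have h2 : HasDerivAt (fun α : ℝ => η * ξ + α * c2) c2 0 :=
      ((hasDerivAt_id 0).mul_const c2).const_add (η * ξ) |>.congr_deriv (by simp)
    have := (h1.pow 2).add (h2.pow 2)
    refine this.congr_deriv ?_
    simp only [c1, c2]
    push_cast
    field_simp
    ring
  constructor
  · rw [hnormSq]
    exact hpoly.congr_of_eventuallyEq (Filter.Eventually.of_forall fun α => key α) |>.congr_deriv rfl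
  · rw [hnormSq]
    have hcoef : 0 < 2 * η / D := by positivity
    rw [Set.mem_Ioo]
    constructor
    · intro h
      refine ⟨hη, ?_⟩
      have hneg : η ^ 2 * ξ ^ 4 - ξ ^ 2 < 0 := by
        by_contra hge
        push_neg at hge
        nlinarith
      have : (η * ξ) ^ 2 < 1 ^ 2 := by nlinarith
      have hlt : η * ξ < 1 := by nlinarith
      rw [lt_div_iff₀ hξ]; exact hlt
    · rintro ⟨h1, h2⟩
      have hlt : η * ξ < 1 := by
        rw [lt_div_iff₀ hξ] at h2; exact h2
      have h4 : (η * ξ) ^ 2 < 1 := by nlinarith [mul_pos hη hξ]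
      have hneg : η ^ 2 * ξ ^ 4 - ξ ^ 2 < 0 := by nlinarith [h4, mul_pos hξ hξ]
      exact mul_neg_of_pos_of_neg hcoef hneg
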